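/- Let f ∈ ℤ[x] be squarefree of degree d without integer roots, let S be its set of roots, suppose S is partitioned into nonempty potent subsets S_1, ..., S_r with dim_ℚ⟨S ∪ {1}⟩ = d + 1 − r, and suppose α_1, ..., α_t ∈ S are distinct roots satisfying a nontrivial ℚ-linear relation a_1 α_1 + ... + a_t α_t = u with u ∈ ℚ and not all a_i zero. Then S_i ⊆ {α_1, ..., α_t} for some i. -/

import Mathlib

open Polynomial
open scoped Classical

/-- A nonempty finite set of algebraic numbers is potent if some
positive-integer combination of its elements is a rational integer. -/
def Potent (T : Finset (AlgebraicClosure ℚ)) : Prop :=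
  T.Nonempty ∧ ∃ c : AlgebraicClosure ℚ → ℕ, (∀ β ∈ T, 0 < c β) ∧
    ∃ z : ℤ, (∑ β ∈ T, (c β : AlgebraicClosure ℚ) * β) = (z : AlgebraicClosure ℚ)

/-- Key linear-algebra step in Theorem 4: let `f` be squarefree of degree `d`
without integer roots, with root set `S` partitioned into nonempty potent
subsets `S₁, …, S_r` such that `dim_ℚ⟨S ∪ {1}⟩ = d + 1 − r`.  If distinct
roots `α₁, …, α_t ∈ S` satisfy a nontrivial `ℚ`-linear relation
`a₁α₁ + ⋯ + a_tα_t = u` with `u ∈ ℚ`, then `Sᵢ ⊆ {α₁, …, α_t}` for some `i`. -/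
theorem stmt_19 (f : Polynomial ℤ) (d : ℕ) (hd : f.natDegree = d)
    (hsf : Squarefree f) (hroots : ∀ n : ℤ, f.eval n ≠ 0)
    (r : ℕ) (S : Fin r → Finset (AlgebraicClosure ℚ))
    (hpart : ∀ β : AlgebraicClosure ℚ,
      (β ∈ (f.aroots (AlgebraicClosure ℚ)).toFinset ↔ ∃ i, β ∈ S i))
    (hdisj : ∀ i j, i ≠ j → Disjoint (S i) (S j))
    (hpot : ∀ i, Potent (S i))
    (hdim : Module.finrank ℚ (Submodule.span ℚ
        (((f.aroots (AlgebraicClosure ℚ)).toFinset : Set (AlgebraicClosure ℚ)) ∪ {1}))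
      = d + 1 - r)
    (t : ℕ) (α : Fin t → AlgebraicClosure ℚ) (hαinj : Function.Injective α)
    (hαS : ∀ i, α i ∈ (f.aroots (AlgebraicClosure ℚ)).toFinset)
    (a : Fin t → ℚ) (hne : ∃ i, a i ≠ 0) (u : ℚ)
    (hrel : ∑ i, a i • α i = (algebraMap ℚ (AlgebraicClosure ℚ)) u) :
    ∃ i, (S i : Set (AlgebraicClosure ℚ)) ⊆ Set.range α := by
  set R : Finset (AlgebraicClosure ℚ) := (f.aroots (AlgebraicClosure ℚ)).toFinset with hRdef
  by_contra hcon
  push_neg at hcon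
  simp only [Set.not_subset] at hcon
  choose β hβS hβα using hcon
  -- basic facts
  have hRcard : R.card ≤ d := by
    calc R.card ≤ (f.aroots (AlgebraicClosure ℚ)).card := (f.aroots (AlgebraicClosure ℚ)).toFinset_card_le
    _ ≤ (f.map (algebraMap ℤ (AlgebraicClosure ℚ))).natDegree := (f.map (algebraMap ℤ (AlgebraicClosure ℚ))).card_roots'
    _ ≤ f.natDegree := natDegree_map_le
    _ = d := hd
  have hSR : ∀ i, ∀ γ ∈ S i, γ ∈ R := fun i γ hγ => (hpart γ).2 ⟨i, hγ⟩
  have hR_eq : R = Finset.univ.biUnion (fun i => S i) := by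
    ext γ
    simp [hpart γ]
  have h1R : (1 : (AlgebraicClosure ℚ)) ∉ R := by
    intro h
    rw [hRdef, Multiset.mem_toFinset, mem_aroots] at h
    have h2 := h.2
    rw [aeval_def, eval₂_at_one] at h2
    simp only [eq_intCast] at h2
    exact hroots 1 (by exact_mod_cast h2)
  -- the spanning set
  set B : Finset (AlgebraicClosure ℚ) := Finset.univ.biUnion (fun i => (S i).erase (β i)) with hBdef
  set G : Finset (AlgebraicClosure ℚ) := B ∪ {1} with hGdef
  have h1G : (1 : (AlgebraicClosure ℚ)) ∈ G := by simp [hGdef]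
  have hBG : ∀ γ ∈ B, γ ∈ G := fun γ hγ => Finset.mem_union_left _ hγ
  have hαG : ∀ i, α i ∈ B := by
    intro i
    obtain ⟨j, hj⟩ := (hpart (α i)).1 (hαS i)
    refine Finset.mem_biUnion.2 ⟨j, Finset.mem_univ _, Finset.mem_erase.2 ⟨?_, hj⟩⟩
    intro h
    exact hβα j (h ▸ Set.mem_range_self i)
  have hα1 : ∀ i, α i ≠ 1 := by
    intro i h
    exact h1R (h ▸ hαS i)
  -- potency: each β i is in the span of G
  have hβspan : ∀ i, β i ∈ Submodule.span ℚ ((G : Finset (AlgebraicClosure ℚ)) : Set (AlgebraicClosure ℚ)) := by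
    intro i
    obtain ⟨-, c, hcpos, z, hz⟩ := hpot i
    have hc0 : ((c (β i) : ℚ)) ≠ 0 := by
      exact_mod_cast (hcpos (β i) (hβS i)).ne'
    have key : (c (β i) : ℚ) • β i ∈ Submodule.span ℚ ((G : Finset (AlgebraicClosure ℚ)) : Set (AlgebraicClosure ℚ)) := by
      have hz' : (c (β i) : AlgebraicClosure ℚ) * β i
          = (z : AlgebraicClosure ℚ) - ∑ x ∈ (S i).erase (β i), (c x : AlgebraicClosure ℚ) * x := by
        rw [eq_sub_iff_add_eq, Finset.add_sum_erase (S i) (fun x => (c x : AlgebraicClosure ℚ) * x) (hβS i), hz]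
      have heq : (c (β i) : ℚ) • β i = (z : ℚ) • (1 : AlgebraicClosure ℚ) -
          ∑ x ∈ (S i).erase (β i), (c x : ℚ) • x := by
        rw [Algebra.smul_def, map_natCast, hz']
        congr 1
        · rw [Algebra.smul_def, mul_one, map_intCast]
        · refine Finset.sum_congr rfl fun x _ => ?_
          rw [Algebra.smul_def, map_natCast]
      rw [heq]
      refine Submodule.sub_mem _ (Submodule.smul_mem _ _
        (Submodule.subset_span h1G)) (Submodule.sum_mem _ fun x hx => ?_)
      refine Submodule.smul_mem _ _ (Submodule.subset_span ?_)
      exact hBG x (Finset.mem_biUnion.2 ⟨i, Finset.mem_univ _, hx⟩)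
    have h3 := Submodule.smul_mem _ ((c (β i) : ℚ))⁻¹ key
    rwa [inv_smul_smul₀ hc0] at h3
  -- span equality
  have hspan : Submodule.span ℚ ((R : Set (AlgebraicClosure ℚ)) ∪ {1})
      = Submodule.span ℚ ((G : Finset (AlgebraicClosure ℚ)) : Set (AlgebraicClosure ℚ)) := by
    apply Submodule.span_eq_span
    · rintro γ (hγ | hγ)
      · obtain ⟨i, hi⟩ := (hpart γ).1 hγ
        by_cases hγβ : γ = β i
        · rw [hγβ]
          exact hβspan i
        · refine Submodule.subset_span (hBG γ ?_)
          exact Finset.mem_biUnion.2 ⟨i, Finset.mem_univ _, Finset.mem_erase.2 ⟨hγβ, hi⟩⟩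
      · rw [Set.mem_singleton_iff] at hγ
        exact hγ ▸ Submodule.subset_span h1G
    · intro γ hγ
      rw [Finset.coe_union, Finset.coe_singleton] at hγ
      rcases hγ with hγ | hγ
      · obtain ⟨i, -, hi⟩ := Finset.mem_biUnion.1 hγ
        exact Submodule.subset_span (Or.inl (hSR i γ (Finset.mem_of_mem_erase hi)))
      · exact Submodule.subset_span (Or.inr hγ)
  -- find a redundant element x of G
  obtain ⟨x, hxG, hxspan⟩ : ∃ x ∈ G, x ∈ Submodule.span ℚ ((G.erase x : Finset (AlgebraicClosure ℚ)) : Set (AlgebraicClosure ℚ)) := by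
    by_cases hu : u = 0
    · obtain ⟨j, hj⟩ := hne
      refine ⟨α j, hBG _ (hαG j), ?_⟩
      have hsum : a j • α j = - ∑ i ∈ Finset.univ.erase j, a i • α i := by
        rw [eq_neg_iff_add_eq_zero, add_comm, Finset.sum_erase_add _ _ (Finset.mem_univ j)]
        rw [hrel, hu, map_zero]
      have hmem : ∀ i ∈ Finset.univ.erase j, α i ∈ (G.erase (α j) : Finset (AlgebraicClosure ℚ)) := by
        intro i hi
        refine Finset.mem_erase.2 ⟨fun h => (Finset.mem_erase.1 hi).1 (hαinj h), hBG _ (hαG i)⟩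
      have : a j • α j ∈ Submodule.span ℚ ((G.erase (α j) : Finset (AlgebraicClosure ℚ)) : Set (AlgebraicClosure ℚ)) := by
        rw [hsum]
        exact Submodule.neg_mem _ (Submodule.sum_mem _ fun i hi =>
          Submodule.smul_mem _ _ (Submodule.subset_span (hmem i hi)))
      have h2 := Submodule.smul_mem _ (a j)⁻¹ this
      rwa [inv_smul_smul₀ hj] at h2
    · refine ⟨1, h1G, ?_⟩
      have hrel' : u • (1 : (AlgebraicClosure ℚ)) = ∑ i, a i • α i := by
        rw [hrel, Algebra.smul_def, mul_one]
      have : u • (1 : (AlgebraicClosure ℚ)) ∈ Submodule.span ℚ ((G.erase 1 : Finset (AlgebraicClosure ℚ)) : Set (AlgebraicClosure ℚ)) := by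
        rw [hrel']
        refine Submodule.sum_mem _ fun i _ => Submodule.smul_mem _ _ (Submodule.subset_span ?_)
        exact Finset.mem_erase.2 ⟨hα1 i, hBG _ (hαG i)⟩
      have h2 := Submodule.smul_mem _ u⁻¹ this
      rwa [inv_smul_smul₀ hu] at h2
  -- rank bound
  have hspan2 : Submodule.span ℚ (G : Set (AlgebraicClosure ℚ)) =
      Submodule.span ℚ ((G.erase x : Finset (AlgebraicClosure ℚ)) : Set (AlgebraicClosure ℚ)) := by
    conv_lhs => rw [← Finset.insert_erase hxG]
    rw [Finset.coe_insert]
    exact Submodule.span_insert_eq_span hxspan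
  have hfr : Module.finrank ℚ (Submodule.span ℚ ((G.erase x : Finset (AlgebraicClosure ℚ)) : Set (AlgebraicClosure ℚ)))
      ≤ (G.erase x).card := finrank_span_finset_le_card _
  rw [← hspan2, ← hspan, hdim] at hfr
  -- cardinality arithmetic
  have hBcard : B.card + r = R.card := by
    rw [hBdef, Finset.card_biUnion (fun i _ j _ hij =>
      Finset.disjoint_of_subset_left (Finset.erase_subset _ _)
        (Finset.disjoint_of_subset_right (Finset.erase_subset _ _) (hdisj i j hij)))]
    rw [hR_eq, Finset.card_biUnion (fun i _ j _ hij => hdisj i j hij)]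
    have h2 : ∑ i, ((S i).erase (β i)).card + ∑ _i : Fin r, 1 = ∑ i, (S i).card := by
      rw [← Finset.sum_add_distrib]
      exact Finset.sum_congr rfl fun i _ => Finset.card_erase_add_one (hβS i)
    simpa using h2
  have hGcard : G.card ≤ B.card + 1 := by
    calc G.card ≤ B.card + ({1} : Finset (AlgebraicClosure ℚ)).card := Finset.card_union_le _ _
    _ = B.card + 1 := by simp
  have hGE : (G.erase x).card = G.card - 1 := Finset.card_erase_of_mem hxG
  have hG1 : 1 ≤ G.card := Finset.card_pos.2 ⟨x, hxG⟩
  omega
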